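/- For any constants c > 0, τ > 0, d > 0 and a > 0, the equation λ² − c·λ − d + a·e^{−λcτ} = 0 has no complex solution λ with Im λ = π/(cτ). -/

import Mathlib

open Set Filter

/-- Assumption (H): Fisher–KPP type structure on the nonlinearity `f`:
`f ∈ C^{1+ν}([0,∞))`, `f(0)=0`, `f'(0) - d > 0`, `f(s) = d·s` has a unique positive
root `u*`, `f` is increasing on `[0,u*]` and `s ↦ f(s)/s` is decreasing on `(0,u*]`. -/
def HypH (d : ℝ) (f : ℝ → ℝ) (ustar : ℝ) : Prop :=
  0 < d ∧
  DifferentiableOn ℝ f (Set.Ici 0) ∧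
  (∃ ν C : ℝ, 0 < ν ∧ ν < 1 ∧ ∀ s ∈ Set.Ici (0 : ℝ), ∀ t ∈ Set.Ici (0 : ℝ),
      |derivWithin f (Set.Ici 0) s - derivWithin f (Set.Ici 0) t| ≤ C * |s - t| ^ ν) ∧
  f 0 = 0 ∧
  d < derivWithin f (Set.Ici 0) 0 ∧
  0 < ustar ∧ f ustar = d * ustar ∧
  (∀ s : ℝ, 0 < s → f s = d * s → s = ustar) ∧
  MonotoneOn f (Set.Icc 0 ustar) ∧
  AntitoneOn (fun s => f s / s) (Set.Ioc 0 ustar)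

/-- Conditions (1.11) on the initial data `(φ, g, h)` over the history interval `[-τ,0]`. -/
def InitData (τ ustar : ℝ) (φ : ℝ → ℝ → ℝ) (g h : ℝ → ℝ) : Prop :=
  (∀ θ ∈ Set.Icc (-τ) 0, g θ < h θ) ∧
  (∀ θ ∈ Set.Icc (-τ) 0, ContDiffOn ℝ 2 (φ θ) (Set.Icc (g θ) (h θ))) ∧
  (∀ x : ℝ, DifferentiableOn ℝ (fun θ => φ θ x) (Set.Icc (-τ) 0)) ∧
  (∀ θ ∈ Set.Icc (-τ) 0, ∀ x ∈ Set.Ioo (g θ) (h θ), 0 < φ θ x ∧ φ θ x ≤ ustar) ∧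
  (∀ θ ∈ Set.Icc (-τ) 0, ∀ x : ℝ, x ∉ Set.Ioo (g θ) (h θ) → φ θ x = 0)

/-- Compatible condition (1.12): `[g(θ), h(θ)] ⊆ [g(0), h(0)]` for `θ ∈ [-τ,0]`. -/
def Compat (τ : ℝ) (g h : ℝ → ℝ) : Prop :=
  ∀ θ ∈ Set.Icc (-τ) 0, Set.Icc (g θ) (h θ) ⊆ Set.Icc (g 0) (h 0)

/-- `(u, g, h)` solves the free boundary problem (P) with initial data `φ`,
with `u` extended by `0` outside `(g(t), h(t))`. -/
structure SolP (d τ μ : ℝ) (f : ℝ → ℝ) (φ : ℝ → ℝ → ℝ)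
    (u : ℝ → ℝ → ℝ) (g h : ℝ → ℝ) : Prop where
  interval : ∀ t > 0, g t < h t
  diff_x : ∀ t > 0, ∀ x ∈ Set.Icc (g t) (h t),
    DifferentiableAt ℝ (u t) x ∧ DifferentiableAt ℝ (deriv (u t)) x
  pde : ∀ t > 0, ∀ x ∈ Set.Ioo (g t) (h t),
    HasDerivAt (fun s => u s x)
      (deriv (deriv (u t)) x - d * u t x + f (u (t - τ) x)) t
  bc_left : ∀ t > 0, u t (g t) = 0
  bc_right : ∀ t > 0, u t (h t) = 0
  fb_left : ∀ t > 0, HasDerivAt g (-μ * deriv (u t) (g t)) t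
  fb_right : ∀ t > 0, HasDerivAt h (-μ * deriv (u t) (h t)) t
  init : ∀ θ ∈ Set.Icc (-τ) 0, ∀ x : ℝ, u θ x = φ θ x
  ext_zero : ∀ t > 0, ∀ x : ℝ, x ∉ Set.Ioo (g t) (h t) → u t x = 0

/-- `q ∈ C²([0,∞))` solves the semi-wave ODE (3.1) with speed `c` and delay `τ`:
`q'' - c q' - d q + f(q(· - cτ)) = 0` on `(0,∞)` and `q = 0` on `(-∞,0]`. -/
def SWode (d τ c : ℝ) (f : ℝ → ℝ) (q : ℝ → ℝ) : Prop :=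
  ContDiffOn ℝ 2 q (Set.Ici 0) ∧
  (∀ z > 0, deriv (deriv q) z - c * deriv q z - d * q z + f (q (z - c * τ)) = 0) ∧
  (∀ z ≤ 0, q z = 0)

/-- A positive solution of the semi-wave ODE (3.1). -/
def SWpos (d τ c : ℝ) (f : ℝ → ℝ) (q : ℝ → ℝ) : Prop :=
  SWode d τ c f q ∧ ∀ z > 0, 0 < q z

/-- `(c, q)` solves the full semi-wave problem (1.14):
positive solution of (3.1) with `q(∞) = u*` and the front condition `μ q'₊(0) = c`. -/
def SemiWave (d τ μ : ℝ) (f : ℝ → ℝ) (ustar c : ℝ) (q : ℝ → ℝ) : Prop :=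
  0 < c ∧ SWode d τ c f q ∧ (∀ z > 0, 0 < q z) ∧
  Filter.Tendsto q Filter.atTop (nhds ustar) ∧
  μ * derivWithin q (Set.Ici 0) 0 = c

/-- Spreading: `g(t) → -∞`, `h(t) → ∞` and `u(t,·) → u*` locally uniformly on `ℝ`. -/
def Spreading (ustar : ℝ) (u : ℝ → ℝ → ℝ) (g h : ℝ → ℝ) : Prop :=
  Filter.Tendsto g Filter.atTop Filter.atBot ∧
  Filter.Tendsto h Filter.atTop Filter.atTop ∧
  ∀ a b : ℝ, TendstoUniformlyOn (fun t x => u t x) (fun _ => ustar) Filter.atTop (Set.Icc a b)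

/-- Step 2 in the proof of Lemma 3.2: for any `c, τ, d, a > 0`, the equation
`λ² - cλ - d + a e^{-λcτ} = 0` has no complex solution with `Im λ = π/(cτ)`. -/
theorem no_root_with_critical_imaginary_part
    (c τ d a : ℝ) (hc : 0 < c) (hτ : 0 < τ) (hd : 0 < d) (ha : 0 < a) :
    ∀ lam : ℂ, lam.im = Real.pi / (c * τ) →
      lam ^ 2 - (c : ℂ) * lam - (d : ℂ) +
        (a : ℂ) * Complex.exp (-(lam * ((c : ℂ) * (τ : ℂ)))) ≠ 0 := by
  intro lam him heq
  have hcτ : (0:ℝ) < c * τ := by positivity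
  set α := lam.re with hα
  have hbeta : lam.im * (c * τ) = Real.pi := by
    rw [him]; field_simp
  have hexp : Complex.exp (-(lam * ((c : ℂ) * (τ : ℂ)))) =
      -(Real.exp (-(α * (c * τ))) : ℂ) := by
    have h1 : -(lam * ((c : ℂ) * (τ : ℂ))) =
        ((-(α * (c * τ)) : ℝ) : ℂ) + (Real.pi : ℂ) * (-Complex.I) := by
      apply Complex.ext <;>
        simp [Complex.mul_re, Complex.mul_im, ← hbeta] <;> ring <;> exact Or.inl hα.symm
    rw [h1, Complex.exp_add]
    rw [show (Real.pi : ℂ) * (-Complex.I) = -(Real.pi * Complex.I) by ring]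
    rw [Complex.exp_neg, Complex.exp_pi_mul_I, Complex.ofReal_exp]
    norm_num
  rw [hexp] at heq
  set E := Real.exp (-(α * (c * τ))) with hE
  have hEpos : 0 < E := Real.exp_pos _
  clear_value E
  have hre := congrArg Complex.re heq
  have him2 := congrArg Complex.im heq
  simp [Complex.mul_re, Complex.mul_im, Complex.sq_norm, pow_two] at hre him2
  -- him2 : imaginary part equation
  have hβ0 : lam.im ≠ 0 := by
    rw [him]; positivity
  have hαc : α = c / 2 := by
    have : (2 * α - c) * lam.im = 0 := by linarith [him2]
    rcases mul_eq_zero.1 this with h | h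
    · linarith
    · exact absurd h hβ0
  have hrelt : α * α - lam.im * lam.im - c * α - d - a * E < 0 := by
    rw [hαc]
    have h1 : (0:ℝ) < lam.im * lam.im := mul_pos (by rw [him]; positivity) (by rw [him]; positivity)
    have h2 : (0:ℝ) < a * E := by positivity
    nlinarith [sq_nonneg c]
  nlinarith [hre, hrelt]
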